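/- Selection correctness: if (i_1,...,i_m) is a valid co-rank vector at rank K ≥ 1 and all values are distinct, then the maximum of the prefix values max { L_t[a] : a < i_t, t ∈ [m] } (over nonempty prefixes) equals the K-th smallest element of the combined multiset of all sequence values. -/
import Mathlib


open scoped BigOperators Classical

/-- Left boundary value `ℓ_t` of the cut: `L_t[i_t - 1]` if `i_t > 0`, else `⊥` (−∞). -/
noncomputable def lcut {m : ℕ} (n : Fin m → ℕ) (L : ∀ t, Fin (n t) → ℝ)
    (i : Fin m → ℕ) (t : Fin m) : EReal :=
  if h : 0 < i t ∧ i t ≤ n t then ((L t ⟨i t - 1, by omega⟩ : ℝ) : EReal) else ⊥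

/-- Right boundary value `r_t` of the cut: `L_t[i_t]` if `i_t < n_t`, else `⊤` (+∞). -/
noncomputable def rcut {m : ℕ} (n : Fin m → ℕ) (L : ∀ t, Fin (n t) → ℝ)
    (i : Fin m → ℕ) (t : Fin m) : EReal :=
  if h : i t < n t then ((L t ⟨i t, h⟩ : ℝ) : EReal) else ⊤

/-- selection correctness: the maximum over the (nonempty) prefixes
of a valid co-rank vector at rank `K ≥ 1` is the `K`-th smallest element of the
combined multiset: exactly `K − 1` elements are strictly smaller. -/
theorem selection_correctness {m : ℕ} (n : Fin m → ℕ) (L : ∀ t, Fin (n t) → ℝ)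
    (hmono : ∀ t, Monotone (L t))
    (hinj : Function.Injective (fun x : Σ t : Fin m, Fin (n t) => L x.1 x.2))
    (K : ℕ) (hK : 1 ≤ K) (i : Fin m → ℕ)
    (hle : ∀ t, i t ≤ n t) (hsum : ∑ t, i t = K)
    (hco : (⨆ t, lcut n L i t) ≤ ⨅ t, rcut n L i t) :
    ∃ (s : Fin m) (a : Fin (n s)), (a : ℕ) < i s ∧
      (∀ (t : Fin m) (b : Fin (n t)), (b : ℕ) < i t → L t b ≤ L s a) ∧
      (Finset.univ.filter
        (fun x : Σ t : Fin m, Fin (n t) => L x.1 x.2 < L s a)).card = K - 1 := by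
  classical
  set P : Finset (Σ t : Fin m, Fin (n t)) :=
    Finset.univ.filter (fun x => (x.2 : ℕ) < i x.1) with hP
  have hPcard : P.card = K := by
    have h1 : P = Finset.univ.sigma
        (fun t => Finset.univ.filter (fun b : Fin (n t) => (b : ℕ) < i t)) := by
      ext x
      simp [hP, Finset.mem_sigma]
    rw [h1, Finset.card_sigma, ← hsum]
    refine Finset.sum_congr rfl fun t _ => ?_
    refine Finset.card_eq_of_bijective (fun j hj => ⟨j, lt_of_lt_of_le hj (hle t)⟩) ?_ ?_ ?_
    · rintro ⟨b, hb⟩ hmem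
      simp only [Finset.mem_filter] at hmem
      exact ⟨b, hmem.2, rfl⟩
      
    · intro j hj; exact Finset.mem_filter.2 ⟨Finset.mem_univ _, hj⟩
    · intro j k hj hk h
      simpa using congrArg (fun b : Fin (n t) => (b : ℕ)) h
  have hPne : P.Nonempty := Finset.card_pos.1 (by omega)
  obtain ⟨x, hxP, hxmax⟩ := P.exists_max_image (fun x => L x.1 x.2) hPne
  obtain ⟨s, a⟩ := x
  have haP : (a : ℕ) < i s := (Finset.mem_filter.1 hxP).2
  -- key: anything outside P is strictly bigger
  have hbig : ∀ (t : Fin m) (b : Fin (n t)), i t ≤ (b : ℕ) → L s a < L t b := by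
    intro t b hb
    have his : 0 < i s ∧ i s ≤ n s := ⟨by omega, hle s⟩
    have hlt : i t < n t := lt_of_le_of_lt hb b.isLt
    have h1 : (L s a : EReal) ≤ lcut n L i s := by
      rw [lcut, dif_pos his]
      exact_mod_cast hmono s (show a ≤ (⟨i s - 1, by omega⟩ : Fin (n s)) by
        simp [Fin.le_def]; omega)
    have h2 : rcut n L i t ≤ (L t b : EReal) := by
      rw [rcut, dif_pos hlt]
      exact_mod_cast hmono t (show (⟨i t, hlt⟩ : Fin (n t)) ≤ b by
        simp [Fin.le_def]; omega)
    have hle2 : (L s a : EReal) ≤ (L t b : EReal) :=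
      h1.trans ((le_iSup _ s).trans (hco.trans ((iInf_le _ t).trans h2)))
    have hle3 : L s a ≤ L t b := by exact_mod_cast hle2
    rcases lt_or_eq_of_le hle3 with h | h
    · exact h
    · exfalso
      have := hinj (a₁ := ⟨s, a⟩) (a₂ := ⟨t, b⟩) h
      have hst : s = t := congrArg Sigma.fst this
      subst hst
      have : a = b := by
        simpa using this
      omega
  refine ⟨s, a, haP, ?_, ?_⟩
  · intro t b hbt
    exact hxmax ⟨t, b⟩ (Finset.mem_filter.2 ⟨Finset.mem_univ _, hbt⟩)
  · have hQ : Finset.univ.filter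
        (fun x : Σ t : Fin m, Fin (n t) => L x.1 x.2 < L s a) = P.erase ⟨s, a⟩ := by
      ext ⟨t, b⟩
      simp only [Finset.mem_filter, Finset.mem_univ, true_and, Finset.mem_erase, hP]
      constructor
      · intro hlt
        refine ⟨?_, ?_⟩
        · intro heq
          have : L t b = L s a := congrArg (fun x : Σ t : Fin m, Fin (n t) => L x.1 x.2) heq
          exact absurd this (ne_of_lt hlt)
        · by_contra hb
          exact absurd hlt (not_lt.2 (hbig t b (by omega)).le)
      · rintro ⟨hne, hb⟩
        have hle4 := hxmax ⟨t, b⟩ (Finset.mem_filter.2 ⟨Finset.mem_univ _, hb⟩)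
        rcases lt_or_eq_of_le hle4 with h | h
        · exact h
        · exact absurd (hinj (a₁ := ⟨t, b⟩) (a₂ := ⟨s, a⟩) h) hne
    rw [hQ, Finset.card_erase_of_mem hxP, hPcard]
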